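/- Let N ≥ 2, m = ⌊N/2⌋, and let g_k ∈ ℤ[[x]] (k = 1,…,m) be as in the previous context, each with constant term 1. Suppose f ∈ ℚ[[x]] has bounded denominator, constant term 1, and satisfies f^n = ∏_{k=1}^m g_k^{n·e(k)} for some positive integer n and rationals e(k) with n·e(k) ∈ ℤ. Then e(k) ∈ ℤ for all k with 2k ≠ N, and e(k) ∈ ½ℤ if 2k = N. -/

import Mathlib

open Finset PowerSeries

/-- The formal power series `g_k = (1−x^k)·∏_{n≥1}(1−x^{nN+k})(1−x^{nN−k}) ∈ ℤ[[x]]`.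
Since for `1 ≤ k < N` the factors with `n > j` do not affect the coefficient of `x^j`,
the infinite product is defined coefficient-wise by a finite truncated product. -/
noncomputable def siegelSeries (N k : ℕ) : PowerSeries ℤ :=
  PowerSeries.mk fun j =>
    PowerSeries.coeff (R := ℤ) j
      ((1 - X ^ k) * ∏ n ∈ Icc 1 (j + 1), ((1 - X ^ (n * N + k)) * (1 - X ^ (n * N - k))))

/-- The image of `g_k` in the field of formal Laurent series `ℚ((x))`. -/
noncomputable def siegelSeriesL (N k : ℕ) : LaurentSeries ℚ :=
  HahnSeries.ofPowerSeries ℤ ℚ (PowerSeries.map (Int.castRingHom ℚ) (siegelSeries N k))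

/-- A power series over `ℚ` has *bounded denominator* if some nonzero integer
multiple of it has integer coefficients. -/
def PowerSeries.HasBoundedDenominator (f : PowerSeries ℚ) : Prop :=
  ∃ d : ℤ, d ≠ 0 ∧ ∀ n : ℕ, ∃ z : ℤ, (d : ℚ) * PowerSeries.coeff (R := ℚ) n f = (z : ℚ)

section PcOne

variable {R : Type*} [CommRing R]

/-- `u ≡ 1` modulo coefficients `1..k-1`. -/
def PcOne (k : ℕ) (u : R⟦X⟧) : Prop :=
  constantCoeff (R := R) u = 1 ∧ ∀ i, 0 < i → i < k → coeff (R := R) i u = 0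

lemma PcOne.one (k : ℕ) : PcOne k (1 : R⟦X⟧) := by
  constructor
  · simp
  · intro i hi _; simp [coeff_one, hi.ne']

lemma coeff_mul_split {k : ℕ} (hk : 0 < k) {u v : R⟦X⟧}
    (hu : PcOne k u) (hv : PcOne k v) :
    coeff (R := R) k (u * v) = coeff (R := R) k u + coeff (R := R) k v := by
  obtain ⟨j, rfl⟩ : ∃ j, k = j + 1 := ⟨k - 1, (Nat.succ_pred_eq_of_pos hk).symm⟩
  rw [coeff_mul, Finset.Nat.sum_antidiagonal_eq_sum_range_succ_mk]
  rw [Finset.sum_range_succ, Finset.sum_range_succ']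
  have h1 : ∑ i ∈ range j, coeff (R := R) (i + 1) u * coeff (R := R) (j + 1 - (i + 1)) v = 0 := by
    apply Finset.sum_eq_zero
    intro i hi
    have := Finset.mem_range.mp hi
    rw [hu.2 (i+1) (Nat.succ_pos i) (by omega), zero_mul]
  rw [h1]
  simp only [coeff_zero_eq_constantCoeff, Nat.sub_zero, Nat.sub_self, hu.1, hv.1]
  ring

lemma PcOne.mul {k : ℕ} {u v : R⟦X⟧} (hu : PcOne k u) (hv : PcOne k v) :
    PcOne k (u * v) := by
  constructor
  · rw [map_mul, hu.1, hv.1, one_mul]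
  · intro i hi hik
    have := coeff_mul_split hi (⟨hu.1, fun a ha hai => hu.2 a ha (lt_trans hai hik)⟩ : PcOne i u)
      (⟨hv.1, fun a ha hai => hv.2 a ha (lt_trans hai hik)⟩ : PcOne i v)
    rw [this, hu.2 i hi hik, hv.2 i hi hik, add_zero]

lemma PcOne.inv {k : ℕ} {u w : R⟦X⟧} (huw : u * w = 1) (hu : PcOne k u) :
    PcOne k w := by
  have hw0 : constantCoeff (R := R) w = 1 := by
    have := congrArg (constantCoeff (R := R)) huw
    rw [map_mul, hu.1, one_mul] at this; simpa using this
  refine ⟨hw0, ?_⟩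
  intro i hi hik
  have h0 : coeff (R := R) i (u * w) = 0 := by rw [huw, coeff_one, if_neg hi.ne']
  rw [coeff_mul, Finset.Nat.sum_antidiagonal_eq_sum_range_succ_mk] at h0
  obtain ⟨j, rfl⟩ : ∃ j, i = j + 1 := ⟨i - 1, (Nat.succ_pred_eq_of_pos hi).symm⟩
  rw [Finset.sum_range_succ'] at h0
  have h1 : ∑ a ∈ range (j+1), coeff (R := R) (a + 1) u * coeff (R := R) (j + 1 - (a + 1)) w = 0 := by
    apply Finset.sum_eq_zero
    intro a ha
    have := Finset.mem_range.mp ha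
    rw [hu.2 (a+1) (Nat.succ_pos a) (by omega), zero_mul]
  rw [h1, zero_add, coeff_zero_eq_constantCoeff, hu.1, one_mul, Nat.sub_zero] at h0
  exact h0

lemma coeff_inv_split {k : ℕ} (hk : 0 < k) {u w : R⟦X⟧} (huw : u * w = 1)
    (hu : PcOne k u) : coeff (R := R) k w = - coeff (R := R) k u := by
  have hw := PcOne.inv huw hu
  have := coeff_mul_split hk hu hw
  rw [huw, coeff_one, if_neg hk.ne'] at this
  linear_combination -this

lemma PcOne.unit_zpow {k : ℕ} (hk : 0 < k) {v : (R⟦X⟧)ˣ} (hv : PcOne k (v : R⟦X⟧)) (t : ℤ) :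
    PcOne k ((v ^ t : (R⟦X⟧)ˣ) : R⟦X⟧) ∧
      coeff (R := R) k ((v ^ t : (R⟦X⟧)ˣ) : R⟦X⟧) = t * coeff (R := R) k (v : R⟦X⟧) := by
  have hinv : PcOne k ((v⁻¹ : (R⟦X⟧)ˣ) : R⟦X⟧) :=
    PcOne.inv (by rw [← Units.val_mul, mul_inv_cancel, Units.val_one]) hv
  have hinvc : coeff (R := R) k ((v⁻¹ : (R⟦X⟧)ˣ) : R⟦X⟧) = - coeff (R := R) k (v : R⟦X⟧) :=
    coeff_inv_split hk (by rw [← Units.val_mul, mul_inv_cancel, Units.val_one]) hv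
  induction t using Int.induction_on with
  | zero => simp [PcOne.one, coeff_one, hk.ne']
  | succ i ih =>
    have h1 : (v ^ ((i : ℤ) + 1) : (R⟦X⟧)ˣ) = v ^ (i : ℤ) * v := by rw [zpow_add_one]
    rw [h1, Units.val_mul]
    refine ⟨ih.1.mul hv, ?_⟩
    rw [coeff_mul_split hk ih.1 hv, ih.2]; push_cast; ring
  | pred i ih =>
    have h1 : (v ^ (-(i : ℤ) - 1) : (R⟦X⟧)ˣ) = v ^ (-(i : ℤ)) * v⁻¹ := by
      rw [← zpow_neg_one, ← zpow_add]; ring_nf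
    rw [h1, Units.val_mul]
    refine ⟨ih.1.mul hinv, ?_⟩
    rw [coeff_mul_split hk ih.1 hinv, ih.2, hinvc]; push_cast; ring

lemma PcOne.unit_prod {k : ℕ} {ι : Type*} (s : Finset ι) (F : ι → (R⟦X⟧)ˣ)
    (hF : ∀ j ∈ s, PcOne k ((F j : R⟦X⟧))) :
    PcOne k (((∏ j ∈ s, F j : (R⟦X⟧)ˣ)) : R⟦X⟧) := by
  classical
  induction s using Finset.induction_on with
  | empty => simpa using PcOne.one k
  | @insert a s' hx ih =>
    rw [Finset.prod_insert hx, Units.val_mul]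
    exact (hF a (Finset.mem_insert_self a s')).mul
      (ih fun j hj => hF j (Finset.mem_insert_of_mem hj))

lemma PcOne.mono {k k' : ℕ} (h : k' ≤ k) {u : R⟦X⟧} (hu : PcOne k u) : PcOne k' u :=
  ⟨hu.1, fun i hi hik => hu.2 i hi (lt_of_lt_of_le hik h)⟩

lemma PcOne.prod {k : ℕ} {ι : Type*} (s : Finset ι) (F : ι → R⟦X⟧)
    (hF : ∀ j ∈ s, PcOne k (F j)) : PcOne k (∏ j ∈ s, F j) := by
  classical
  induction s using Finset.induction_on with
  | empty => simpa using PcOne.one k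
  | @insert a s' hx ih =>
    rw [Finset.prod_insert hx]
    exact (hF a (Finset.mem_insert_self a s')).mul
      (ih fun j hj => hF j (Finset.mem_insert_of_mem hj))

lemma coeff_mul_trunc {i : ℕ} {q B : R⟦X⟧} (hB : PcOne (i+1) B) :
    coeff (R := R) i (q * B) = coeff (R := R) i q := by
  rw [coeff_mul, Finset.sum_eq_single (i, 0)]
  · rw [coeff_zero_eq_constantCoeff, hB.1, mul_one]
  · rintro ⟨a, b⟩ hab hne
    have hs : a + b = i := Finset.HasAntidiagonal.mem_antidiagonal.mp hab
    have hb : 0 < b := by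
      rcases Nat.eq_zero_or_pos b with h | h
      · exact absurd (by simp [h, ← hs]) hne
      · exact h
    rw [hB.2 b hb (by omega), mul_zero]
  · intro hmem
    exact absurd (Finset.HasAntidiagonal.mem_antidiagonal.mpr (by simp)) hmem

lemma pcOne_one_sub_X_pow {k a : ℕ} (ha : k ≤ a) (ha0 : 0 < a) :
    PcOne k ((1 - X ^ a : R⟦X⟧)) := by
  constructor
  · rw [map_sub, map_one, ← coeff_zero_eq_constantCoeff, coeff_X_pow,
      if_neg (by omega : ¬ (0:ℕ) = a), sub_zero]
  · intro i hi hik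
    rw [map_sub, coeff_one, coeff_X_pow, if_neg hi.ne', if_neg (by omega), sub_zero]

end PcOne

/-- Coefficients of `siegelSeries N k` up to degree `m`. -/
lemma siegelSeries_coeff (N : ℕ) (hN : 2 ≤ N) {m : ℕ} (hm : m = N / 2) {k : ℕ}
    (hk1 : 1 ≤ k) (hkm : k ≤ m) {i : ℕ} (him : i ≤ m) :
    coeff (R := ℤ) i (siegelSeries N k) =
      (if i = 0 then 1 else 0) + (if i = k then (if 2*k = N then -2 else -1) else 0) := by
  have hm2 : 2*m ≤ N ∧ N ≤ 2*m + 1 := by omega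
  have hm1 : 1 ≤ m := by omega
  rw [siegelSeries, coeff_mk]
  by_cases hkN : 2*k = N
  · -- k = m, N = 2m
    have hkm' : k = m := by omega
    have h1mem : 1 ∈ Icc 1 (i+1) := by simp
    rw [← Finset.mul_prod_erase _ _ h1mem]
    have hC : PcOne (i+1) ((1 - X ^ (1*N+k)) *
        ∏ n ∈ (Icc 1 (i+1)).erase 1, ((1 - X^(n*N+k)) * (1 - X^(n*N-k))) : ℤ⟦X⟧) := by
      refine PcOne.mul ?_ ?_
      · exact pcOne_one_sub_X_pow (by omega) (by omega)
      · refine PcOne.prod _ _ fun n hn => ?_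
        have hn2 : 2 ≤ n ∧ n ≤ i+1 := by
          have h1 := Finset.mem_erase.mp hn
          have h2 := Finset.mem_Icc.mp h1.2
          omega
        have h2N : 2*N ≤ n*N := Nat.mul_le_mul_right N hn2.1
        exact PcOne.mul (pcOne_one_sub_X_pow (by omega) (by omega))
          (pcOne_one_sub_X_pow (by omega) (by omega))
    have hrearr : ((1 - X^k) * ((1 - X^(1*N+k)) * (1 - X^(1*N-k)) *
        ∏ n ∈ (Icc 1 (i+1)).erase 1, ((1 - X^(n*N+k)) * (1 - X^(n*N-k)))) : ℤ⟦X⟧)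
        = ((1 - X^k) * (1 - X^(1*N-k))) * ((1 - X^(1*N+k)) *
          ∏ n ∈ (Icc 1 (i+1)).erase 1, ((1 - X^(n*N+k)) * (1 - X^(n*N-k)))) := by ring
    rw [hrearr, coeff_mul_trunc hC]
    have hNk : 1*N - k = k := by omega
    rw [hNk]
    have hsq : ((1 - X^k) * (1 - X^k) : ℤ⟦X⟧) = 1 - (X^k + X^k) + X^(k+k) := by
      rw [pow_add]; ring
    rw [hsq, map_add, map_sub, map_add, coeff_one, coeff_X_pow, coeff_X_pow]
    split_ifs <;> omega
  · -- all other exponents exceed m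
    have hB : PcOne (i+1) (∏ n ∈ Icc 1 (i+1), ((1 - X^(n*N+k)) * (1 - X^(n*N-k))) : ℤ⟦X⟧) := by
      refine PcOne.prod _ _ fun n hn => ?_
      have hn1 : 1 ≤ n := (Finset.mem_Icc.mp hn).1
      have hnN : N ≤ n*N := Nat.le_mul_of_pos_left N (by omega)
      exact PcOne.mul (pcOne_one_sub_X_pow (by omega) (by omega))
        (pcOne_one_sub_X_pow (by omega) (by omega))
    rw [coeff_mul_trunc hB, map_sub, coeff_one, coeff_X_pow]
    split_ifs <;> omega

/-- a version of Gauss's lemma: a power series with bounded denominator, constant term 1,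
whose n-th power has integer coefficients, has integer coefficients. -/
lemma integral_coeffs_of_pow_integral (f : ℚ⟦X⟧) (d : ℤ) (hd : d ≠ 0)
    (z : ℕ → ℤ) (hz : ∀ j, (d : ℚ) * coeff (R := ℚ) j f = (z j : ℚ))
    (hf0 : constantCoeff (R := ℚ) f = 1)
    (n : ℕ) (hn : 0 < n) (F : ℤ⟦X⟧)
    (hF : f ^ n = PowerSeries.map (Int.castRingHom ℚ) F) :
    ∀ j, ∃ w : ℤ, coeff (R := ℚ) j f = (w : ℚ) := by
  suffices hdvd : ∀ j, d ∣ z j by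
    intro j
    obtain ⟨w, hw⟩ := hdvd j
    refine ⟨w, ?_⟩
    have h1 := hz j
    rw [hw] at h1
    push_cast at h1
    exact mul_left_cancel₀ (by exact_mod_cast hd) h1
  have key : ∀ J : ℕ, (d ^ n * coeff (R := ℤ) J F : ℤ) =
      ∑ l ∈ finsuppAntidiag (range n) J, ∏ i ∈ range n, z (l i) := by
    intro J
    have h1 : coeff (R := ℚ) J (f ^ n) = ((coeff (R := ℤ) J F : ℤ) : ℚ) := by
      rw [hF, coeff_map]; rfl
    have h2 : (d : ℚ) ^ n * coeff (R := ℚ) J (f ^ n) =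
        ∑ l ∈ finsuppAntidiag (range n) J, ∏ i ∈ range n, ((z (l i) : ℤ) : ℚ) := by
      rw [coeff_pow, Finset.mul_sum]
      refine Finset.sum_congr rfl fun l _ => ?_
      calc (d:ℚ)^n * ∏ i ∈ range n, coeff (R := ℚ) (l i) f
          = ∏ i ∈ range n, ((d:ℚ) * coeff (R := ℚ) (l i) f) := by
            rw [Finset.prod_mul_distrib, Finset.prod_const, Finset.card_range]
        _ = ∏ i ∈ range n, ((z (l i) : ℤ) : ℚ) := Finset.prod_congr rfl fun i _ => hz (l i)
    rw [h1] at h2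
    exact_mod_cast h2
  intro j
  rw [← Int.natAbs_dvd_natAbs]
  rw [Nat.dvd_iff_prime_pow_dvd_dvd]
  intro p t hp ht
  have hdn : d.natAbs ≠ 0 := Int.natAbs_ne_zero.mpr hd
  set a := d.natAbs.factorization p with ha
  have hta : t ≤ a := (Nat.Prime.pow_dvd_iff_le_factorization hp hdn).mp ht
  have hpa : ∀ w : ℤ, (p:ℤ) ^ a ∣ w → (p:ℕ) ^ t ∣ w.natAbs := by
    intro w hw
    rw [← Int.natAbs_dvd_natAbs] at hw
    simp only [Int.natAbs_pow, Int.natAbs_natCast] at hw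
    exact dvd_trans (pow_dvd_pow p hta) hw
  refine hpa _ ?_
  by_contra hbad
  set b : ℕ → ℕ := fun i => (z i).natAbs.factorization p with hb
  have hzbad : z j ≠ 0 := by rintro h; exact hbad (by simp [h])
  have hbj : b j < a := by
    by_contra hc
    push_neg at hc
    refine hbad ?_
    rw [← Int.natAbs_dvd_natAbs]
    simp only [Int.natAbs_pow, Int.natAbs_natCast]
    exact (Nat.Prime.pow_dvd_iff_le_factorization hp (Int.natAbs_ne_zero.mpr hzbad)).mpr hc
  have hPex : ∃ t', ∃ i, z i ≠ 0 ∧ b i = t' := ⟨b j, j, hzbad, rfl⟩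
  classical
  set β := Nat.find hPex with hβ
  obtain ⟨j', hj'z, hj'b⟩ := Nat.find_spec hPex
  have hβle : β ≤ b j := by
    by_contra hc
    push_neg at hc
    exact Nat.find_min hPex hc ⟨j, hzbad, rfl⟩
  have hβa : β < a := lt_of_le_of_lt hβle hbj
  have hβmin : ∀ i, z i ≠ 0 → β ≤ b i := by
    intro i hi
    by_contra hc
    push_neg at hc
    exact Nat.find_min hPex hc ⟨i, hi, rfl⟩
  have hQex : ∃ i, z i ≠ 0 ∧ b i = β := ⟨j', hj'z, hj'b⟩
  set j₀ := Nat.find hQex with hj₀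
  obtain ⟨hj₀z, hj₀b⟩ := Nat.find_spec hQex
  have hj₀min : ∀ i, i < j₀ → z i ≠ 0 → β + 1 ≤ b i := by
    intro i hi hzi
    have h1 := Nat.find_min hQex hi
    push_neg at h1
    have := h1 hzi
    have := hβmin i hzi
    omega
  have hz0 : z 0 = d := by
    have := hz 0
    rw [coeff_zero_eq_constantCoeff, hf0, mul_one] at this
    exact_mod_cast this.symm
  have hj₀pos : 0 < j₀ := by
    have hj₀b' : b j₀ = β := hj₀b
    rcases Nat.eq_zero_or_pos j₀ with h | h
    · exfalso
      have hb0 : b 0 = a := by simp only [hb, hz0, ha]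
      rw [h] at hj₀b'
      omega
    · exact h
  have hdvdβ : ∀ i, (p:ℤ) ^ β ∣ z i := by
    intro i
    rcases eq_or_ne (z i) 0 with h | h
    · simp [h]
    · rw [← Int.natAbs_dvd_natAbs]
      simp only [Int.natAbs_pow, Int.natAbs_natCast]
      exact (Nat.Prime.pow_dvd_iff_le_factorization hp (Int.natAbs_ne_zero.mpr h)).mpr (hβmin i h)
  have hdvdβ1 : ∀ i, i < j₀ → (p:ℤ) ^ (β+1) ∣ z i := by
    intro i hi
    rcases eq_or_ne (z i) 0 with h | h
    · simp [h]
    · rw [← Int.natAbs_dvd_natAbs]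
      simp only [Int.natAbs_pow, Int.natAbs_natCast]
      exact (Nat.Prime.pow_dvd_iff_le_factorization hp (Int.natAbs_ne_zero.mpr h)).mpr
        (hj₀min i hi h)
  set l₀ : ℕ →₀ ℕ := Finsupp.indicator (range n) (fun _ _ => j₀) with hl₀
  have hl₀app : ∀ i ∈ range n, l₀ i = j₀ := by
    intro i hi; rw [hl₀]; exact Finsupp.indicator_of_mem hi _
  have hl₀mem : l₀ ∈ finsuppAntidiag (range n) (n * j₀) := by
    rw [Finset.mem_finsuppAntidiag]
    constructor
    · rw [Finset.sum_congr rfl hl₀app, Finset.sum_const, Finset.card_range, smul_eq_mul]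
    · exact Finsupp.support_indicator_subset _ _
  have hsplit : ∑ l ∈ finsuppAntidiag (range n) (n * j₀), ∏ i ∈ range n, z (l i)
      = z j₀ ^ n + ∑ l ∈ (finsuppAntidiag (range n) (n * j₀)).erase l₀,
          ∏ i ∈ range n, z (l i) := by
    rw [← Finset.add_sum_erase _ _ hl₀mem]
    congr 1
    rw [Finset.prod_congr rfl fun i hi => by rw [hl₀app i hi], Finset.prod_const,
      Finset.card_range]
  have herase : ∀ l ∈ (finsuppAntidiag (range n) (n * j₀)).erase l₀,
      (p:ℤ) ^ (n*β+1) ∣ ∏ i ∈ range n, z (l i) := by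
    intro l hl
    obtain ⟨hlne, hlmem⟩ := Finset.mem_erase.mp hl
    rw [Finset.mem_finsuppAntidiag] at hlmem
    have hex : ∃ i ∈ range n, l i < j₀ := by
      by_contra hc
      push_neg at hc
      apply hlne
      have hsum : ∑ i ∈ range n, l i = n * j₀ := hlmem.1
      have hconst : ∑ i ∈ range n, j₀ = n * j₀ := by
        rw [Finset.sum_const, Finset.card_range, smul_eq_mul]
      have hall : ∀ i ∈ range n, j₀ = l i :=
        (Finset.sum_eq_sum_iff_of_le fun i hi => hc i hi).mp (by rw [hconst, hsum])
      ext i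
      by_cases hmem : i ∈ range n
      · rw [← hall i hmem, hl₀app i hmem]
      · have h1 : l i = 0 := by
          by_contra hne0
          exact hmem (hlmem.2 (Finsupp.mem_support_iff.mpr hne0))
        have h2 : l₀ i = 0 := Finsupp.indicator_of_notMem hmem _
        rw [h1, h2]
    obtain ⟨i1, hi1, hlt1⟩ := hex
    rw [← Finset.mul_prod_erase _ _ hi1]
    have h1 : (p:ℤ)^(β+1) ∣ z (l i1) := hdvdβ1 _ hlt1
    have h2 : (p:ℤ)^(β*(n-1)) ∣ ∏ i ∈ (range n).erase i1, z (l i) := by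
      have hcard : ((range n).erase i1).card = n - 1 := by
        rw [Finset.card_erase_of_mem hi1, Finset.card_range]
      calc (p:ℤ)^(β*(n-1)) = ∏ _i ∈ (range n).erase i1, (p:ℤ)^β := by
            rw [Finset.prod_const, hcard, ← pow_mul]
        _ ∣ ∏ i ∈ (range n).erase i1, z (l i) :=
            Finset.prod_dvd_prod_of_dvd _ _ (fun i _ => hdvdβ (l i))
    have h3 := mul_dvd_mul h1 h2
    rw [← pow_add] at h3
    have heq : β + 1 + β * (n-1) = n * β + 1 := by
      obtain ⟨n', rfl⟩ := Nat.exists_eq_add_of_le (Nat.one_le_iff_ne_zero.mpr hn.ne')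
      rw [Nat.add_sub_cancel_left]
      ring
    rw [heq] at h3
    exact h3
  have hdvdsum : (p:ℤ) ^ (n*β+1) ∣ ∑ l ∈ (finsuppAntidiag (range n) (n * j₀)).erase l₀,
      ∏ i ∈ range n, z (l i) := Finset.dvd_sum herase
  have hdvdF : (p:ℤ) ^ (n*β+1) ∣ d ^ n * coeff (R := ℤ) (n * j₀) F := by
    have h1 : (p:ℤ) ^ a ∣ d := by
      rw [← Int.natAbs_dvd_natAbs]
      simp only [Int.natAbs_pow, Int.natAbs_natCast]
      exact Nat.ordProj_dvd _ _
    have h2 : (p:ℤ) ^ (n*a) ∣ d ^ n := by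
      rw [mul_comm, pow_mul]
      exact pow_dvd_pow_of_dvd h1 n
    have h4 : n*β+1 ≤ n*a := by
      calc n*β+1 ≤ n*β+n := by omega
        _ = n*(β+1) := by ring
        _ ≤ n*a := Nat.mul_le_mul_left n hβa
    exact dvd_mul_of_dvd_left (dvd_trans (pow_dvd_pow _ h4) h2) _
  have hfinal : (p:ℤ) ^ (n*β+1) ∣ z j₀ ^ n := by
    have := key (n * j₀)
    rw [hsplit] at this
    have h1 : z j₀ ^ n = d ^ n * coeff (R := ℤ) (n * j₀) F -
        ∑ l ∈ (finsuppAntidiag (range n) (n * j₀)).erase l₀,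
          ∏ i ∈ range n, z (l i) := eq_sub_iff_add_eq.mpr this.symm
    rw [h1]
    exact dvd_sub hdvdF hdvdsum
  have hj₀b' : (z j₀).natAbs.factorization p = β := hj₀b
  have hvp : ((z j₀).natAbs ^ n).factorization p = n * β := by
    rw [Nat.factorization_pow, Finsupp.smul_apply, hj₀b', smul_eq_mul]
  have hne : (z j₀).natAbs ^ n ≠ 0 :=
    pow_ne_zero n (Int.natAbs_ne_zero.mpr hj₀z)
  rw [← Int.natAbs_dvd_natAbs] at hfinal
  simp only [Int.natAbs_pow, Int.natAbs_natCast] at hfinal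
  have := (Nat.Prime.pow_dvd_iff_le_factorization hp hne).mp hfinal
  omega

section Root

variable {R : Type*} [CommRing R]

lemma coeff_mul_low {r r' : ℕ} {s q : R⟦X⟧} (hs : ∀ i, i < r → coeff (R := R) i s = 0)
    (hq : ∀ i, i < r' → coeff (R := R) i q = 0) : ∀ i, i < r + r' → coeff (R := R) i (s * q) = 0 := by
  intro i hi
  rw [coeff_mul]
  refine Finset.sum_eq_zero fun p hp => ?_
  have hps : p.1 + p.2 = i := Finset.HasAntidiagonal.mem_antidiagonal.mp hp
  rcases lt_or_ge p.1 r with h | h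
  · rw [hs p.1 h, zero_mul]
  · rw [hq p.2 (by omega), mul_zero]

lemma coeff_pow_low {r : ℕ} {s : R⟦X⟧} (hs : ∀ i, i < r → coeff (R := R) i s = 0) (t : ℕ) :
    ∀ i, i < t * r → coeff (R := R) i (s ^ t) = 0 := by
  induction t with
  | zero => intro i hi; omega
  | succ t ih =>
    intro i hi
    rw [pow_succ']
    have h1 : (t+1) * r = r + t * r := by ring
    exact coeff_mul_low hs ih i (by omega)

lemma coeff_pow_eq_nsmul {i₀ : ℕ} (hi₀ : 0 < i₀) {h : R⟦X⟧} (h0 : constantCoeff (R := R) h = 1)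
    (hlow : ∀ i, 0 < i → i < i₀ → coeff (R := R) i h = 0) {n : ℕ} (hn : 0 < n) :
    coeff (R := R) i₀ (h ^ n) = n * coeff (R := R) i₀ h := by
  set s := h - 1 with hs
  have hsl : ∀ i, i < i₀ → coeff (R := R) i s = 0 := by
    intro i hi
    rcases Nat.eq_zero_or_pos i with h' | h'
    · subst h'
      rw [hs, map_sub, coeff_zero_eq_constantCoeff, h0, map_one, sub_self]
    · rw [hs, map_sub, hlow i h' hi, coeff_one, if_neg h'.ne', sub_self]
  have hsk : coeff (R := R) i₀ s = coeff (R := R) i₀ h := by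
    rw [hs, map_sub, coeff_one, if_neg hi₀.ne', sub_zero]
  have hh : h = s + 1 := by rw [hs]; ring
  rw [hh, add_pow, map_sum, Finset.sum_eq_single 1]
  · rw [pow_one, one_pow, mul_one, ← map_natCast (C (R := R)) (n.choose 1), coeff_mul_C,
      Nat.choose_one_right, hsk]
    rw [map_add, coeff_one, if_neg hi₀.ne', add_zero, hsk]; ring
  · intro t ht hne
    rcases Nat.eq_zero_or_pos t with h' | h'
    · subst h'
      rw [pow_zero, one_pow, one_mul, ← map_natCast (C (R := R)) (n.choose 0), ← map_one (C (R := R)),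
        ← map_mul, PowerSeries.coeff_C, if_neg hi₀.ne']
    · have ht2 : 2 ≤ t := by omega
      rw [one_pow, mul_one, ← map_natCast (C (R := R)) (n.choose t), coeff_mul_C,
        coeff_pow_low hsl t i₀ ?_, zero_mul]
      have : 2 * i₀ ≤ t * i₀ := Nat.mul_le_mul_right i₀ ht2
      omega
  · intro hmem
    exact absurd (Finset.mem_range.mpr (by omega)) hmem

end Root

lemma PcOne_of_pow {k n : ℕ} (hk : 0 < k) (hn : 0 < n) {h : ℚ⟦X⟧}
    (h0 : constantCoeff (R := ℚ) h = 1) (hpow : PcOne k (h ^ n)) :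
    PcOne k h ∧ (n : ℚ) * coeff (R := ℚ) k h = coeff (R := ℚ) k (h ^ n) := by
  have hlow : ∀ i, 0 < i → i < k → coeff (R := ℚ) i h = 0 := by
    intro i hi hik
    induction i using Nat.strong_induction_on with
    | _ i ih =>
      have hstep := coeff_pow_eq_nsmul hi h0
        (fun i' h1 h2 => ih i' h2 h1 (lt_trans h2 hik)) hn
      rw [hpow.2 i hi hik] at hstep
      have hn0 : (n : ℚ) ≠ 0 := Nat.cast_ne_zero.mpr hn.ne'
      exact (mul_eq_zero.mp hstep.symm).resolve_left hn0
  exact ⟨⟨h0, hlow⟩, (coeff_pow_eq_nsmul hk h0 hlow hn).symm⟩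

/-- If `f ∈ ℚ[[x]]` has bounded denominator and constant term `1`, and
`f^n = ∏_{k=1}^m g_k^{n·e(k)}` for a positive integer `n` and rationals `e(k)` with
`n·e(k) ∈ ℤ`, then `e(k) ∈ ℤ` whenever `2k ≠ N` and `e(k) ∈ ½ℤ` when `2k = N`. -/
theorem siegelSeries_exponents_integral (N : ℕ) (hN : 2 ≤ N) (m : ℕ) (hm : m = N / 2)
    (f : PowerSeries ℚ) (hfbd : f.HasBoundedDenominator)
    (hf1 : PowerSeries.constantCoeff (R := ℚ) f = 1)
    (n : ℕ) (hn : 0 < n) (e : ℕ → ℚ) (E : ℕ → ℤ)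
    (hE : ∀ k ∈ Icc 1 m, (E k : ℚ) = (n : ℚ) * e k)
    (h : (HahnSeries.ofPowerSeries ℤ ℚ f : LaurentSeries ℚ) ^ n =
      ∏ k ∈ Icc 1 m, siegelSeriesL N k ^ E k) :
    ∀ k ∈ Icc 1 m,
      (2 * k ≠ N → ∃ z : ℤ, e k = (z : ℚ)) ∧
      (2 * k = N → ∃ z : ℤ, e k = (z : ℚ) / 2) := by
  classical
  have hm2 : 2*m ≤ N ∧ N ≤ 2*m+1 := by omega
  have hm1 : 1 ≤ m := by omega
  set ι₁ : ℤ⟦X⟧ →+* ℚ⟦X⟧ := PowerSeries.map (Int.castRingHom ℚ) with hι₁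
  set ι₂ : ℚ⟦X⟧ →+* LaurentSeries ℚ := (HahnSeries.ofPowerSeries ℤ ℚ) with hι₂
  -- constant coefficients of `g_k`
  have hgconst : ∀ k, 1 ≤ k → k ≤ m → constantCoeff (R := ℤ) (siegelSeries N k) = 1 := by
    intro k hk1 hkm
    have hc := siegelSeries_coeff N hN hm hk1 hkm (i := 0) (by omega)
    rw [coeff_zero_eq_constantCoeff] at hc
    rw [hc, if_pos rfl, if_neg (by omega), add_zero]
  -- integer units above the `g_k`
  set v : ℕ → (ℤ⟦X⟧)ˣ := fun k => if h : IsUnit (siegelSeries N k) then h.unit else 1 with hv0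
  have hv : ∀ k, 1 ≤ k → k ≤ m → ((v k : ℤ⟦X⟧)) = siegelSeries N k := by
    intro k hk1 hkm
    have hu : IsUnit (siegelSeries N k) := isUnit_iff_constantCoeff.mpr
      (by rw [hgconst k hk1 hkm]; exact isUnit_one)
    rw [hv0]
    simp only [dif_pos hu]
    exact hu.unit_spec
  -- translate the Laurent-series hypothesis into power series over ℚ
  set W : (ℤ⟦X⟧)ˣ := ∏ k ∈ Icc 1 m, v k ^ E k with hW
  have hfn : f ^ n = ι₁ (W : ℤ⟦X⟧) := by
    apply HahnSeries.ofPowerSeries_injective (Γ := ℤ) (R := ℚ)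
    show ι₂ (f ^ n) = ι₂ (ι₁ (W : ℤ⟦X⟧))
    have hL : ∀ k ∈ Icc 1 m, siegelSeriesL N k ^ E k =
        ((Units.map (ι₂.comp ι₁).toMonoidHom (v k) ^ E k : (LaurentSeries ℚ)ˣ) :
          LaurentSeries ℚ) := by
      intro k hk
      obtain ⟨hk1, hkm⟩ := Finset.mem_Icc.mp hk
      rw [Units.val_zpow_eq_zpow_val]
      congr 1
      rw [Units.coe_map]
      show siegelSeriesL N k = (ι₂.comp ι₁) ((v k : ℤ⟦X⟧))
      rw [hv k hk1 hkm]
      rfl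
    rw [map_pow, h, Finset.prod_congr rfl hL]
    have h2 : (∏ k ∈ Icc 1 m,
        ((Units.map (ι₂.comp ι₁).toMonoidHom (v k) ^ E k : (LaurentSeries ℚ)ˣ) :
          LaurentSeries ℚ)) =
        ((Units.map (ι₂.comp ι₁).toMonoidHom W : (LaurentSeries ℚ)ˣ) : LaurentSeries ℚ) := by
      rw [hW, map_prod, Units.coe_prod]
      exact Finset.prod_congr rfl fun k _ => by rw [map_zpow]
    rw [h2, Units.coe_map]
    rfl
  -- Gauss's lemma: f has integer coefficients
  obtain ⟨d, hd, hzex⟩ := hfbd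
  choose z hz using hzex
  have hint := integral_coeffs_of_pow_integral f d hd z hz hf1 n hn (W : ℤ⟦X⟧) hfn
  choose w hw using hint
  set fI : ℤ⟦X⟧ := PowerSeries.mk w with hfI
  have hmapf : ι₁ fI = f := by
    ext j
    rw [hι₁, coeff_map, hfI, coeff_mk, hw j]
    simp
  have hfI0 : constantCoeff (R := ℤ) fI = 1 := by
    have h1 : ((constantCoeff (R := ℤ) fI : ℤ) : ℚ) = 1 := by
      rw [← hf1, ← hmapf, hι₁]
      rw [← coeff_zero_eq_constantCoeff, ← coeff_zero_eq_constantCoeff, coeff_map]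
      rfl
    exact_mod_cast h1
  have hfIunit : IsUnit fI := isUnit_iff_constantCoeff.mpr (by rw [hfI0]; exact isUnit_one)
  set fU : (ℤ⟦X⟧)ˣ := hfIunit.unit with hfU
  have hfUval : ((fU : ℤ⟦X⟧)) = fI := hfIunit.unit_spec
  -- units over ℚ
  set vq : ℕ → (ℚ⟦X⟧)ˣ := fun k => Units.map ι₁.toMonoidHom (v k) with hvq
  set fUq : (ℚ⟦X⟧)ˣ := Units.map ι₁.toMonoidHom fU with hfUq
  have hfUqval : ((fUq : ℚ⟦X⟧)) = f := by
    rw [hfUq, Units.coe_map]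
    show ι₁ ((fU : ℤ⟦X⟧)) = f
    rw [hfUval, hmapf]
  have hvqval : ∀ k, ((vq k : ℚ⟦X⟧)) = ι₁ ((v k : ℤ⟦X⟧)) := by
    intro k; rw [hvq]; rfl
  have hfUn : fUq ^ n = ∏ k ∈ Icc 1 m, vq k ^ E k := by
    have hWq : Units.map ι₁.toMonoidHom W = ∏ k ∈ Icc 1 m, vq k ^ E k := by
      rw [hW, map_prod]
      exact Finset.prod_congr rfl fun k _ => by rw [map_zpow]
    apply Units.ext
    rw [Units.val_pow_eq_pow_val, hfUqval, hfn, ← hWq, Units.coe_map]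
    rfl
  -- coefficients of the `vq` on the ℚ side
  have hvqcoeff : ∀ k, 1 ≤ k → k ≤ m → ∀ i, i ≤ m →
      coeff (R := ℚ) i ((vq k : ℚ⟦X⟧)) = (if i = 0 then 1 else 0) +
        (if i = k then (if 2*k = N then -2 else -1) else 0) := by
    intro k hk1 hkm i him
    rw [hvqval, hι₁, coeff_map, hv k hk1 hkm, siegelSeries_coeff N hN hm hk1 hkm him]
    split_ifs <;> norm_num
  have hPvq : ∀ j k', 1 ≤ j → j ≤ m → k' ≤ j → PcOne k' ((vq j : ℚ⟦X⟧)) := by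
    intro j k' hj1 hjm hk'j
    constructor
    · rw [← coeff_zero_eq_constantCoeff, hvqcoeff j hj1 hjm 0 (by omega),
        if_pos rfl, if_neg (by omega), add_zero]
    · intro i hi hik
      rw [hvqcoeff j hj1 hjm i (by omega), if_neg (by omega), if_neg (by omega), add_zero]
  -- the core induction step
  have hstep : ∀ k, 1 ≤ k → k ≤ m → (∀ j, 1 ≤ j → j < k → ∃ w' : ℤ, E j = n * w') →
      ∃ w' : ℤ, (if 2*k = N then (2:ℤ) else 1) * E k = n * w' := by
    intro k hk1 hkm IH
    have hk0 : 0 < k := hk1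
    set c : ℤ := if 2*k = N then 2 else 1 with hc
    have IH' : ∀ j, ∃ w' : ℤ, (1 ≤ j ∧ j < k) → E j = n * w' := by
      intro j
      by_cases hj : 1 ≤ j ∧ j < k
      · obtain ⟨w', hw'⟩ := IH j hj.1 hj.2; exact ⟨w', fun _ => hw'⟩
      · exact ⟨0, fun hc' => absurd hc' hj⟩
    choose cW hcW using IH'
    set A : (ℤ⟦X⟧)ˣ := ∏ j ∈ Icc 1 (k-1), v j ^ cW j with hA
    set hU : (ℤ⟦X⟧)ˣ := fU * A⁻¹ with hhU
    set Aq : (ℚ⟦X⟧)ˣ := Units.map ι₁.toMonoidHom A with hAq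
    set hUq : (ℚ⟦X⟧)ˣ := fUq * Aq⁻¹ with hhUq
    have hUqmap : hUq = Units.map ι₁.toMonoidHom hU := by
      rw [hhUq, hhU, map_mul, map_inv, hAq, hfUq]
    have hAqprod : Aq = ∏ j ∈ Icc 1 (k-1), vq j ^ cW j := by
      rw [hAq, hA, map_prod]
      exact Finset.prod_congr rfl fun j _ => by rw [map_zpow]
    have hAqn : Aq ^ n = ∏ j ∈ Icc 1 (k-1), vq j ^ E j := by
      rw [hAqprod, ← Finset.prod_pow]
      refine Finset.prod_congr rfl fun j hj => ?_
      obtain ⟨hj1, hjk⟩ := Finset.mem_Icc.mp hj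
      have hEj : E j = (n:ℤ) * cW j := hcW j ⟨hj1, by omega⟩
      rw [← zpow_natCast (vq j ^ cW j) n, ← zpow_mul]
      congr 1
      rw [hEj]; ring
    have hsplitprod : (∏ j ∈ Icc 1 m, vq j ^ E j) =
        (∏ j ∈ Icc 1 (k-1), vq j ^ E j) * ∏ j ∈ Icc k m, vq j ^ E j := by
      have e1 : Icc 1 m = Ico 1 (m+1) := (Finset.Ico_add_one_right_eq_Icc 1 m).symm
      have e2 : Icc 1 (k-1) = Ico 1 k := by
        rw [← Finset.Ico_add_one_right_eq_Icc]
        congr 1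
        omega
      have e3 : Icc k m = Ico k (m+1) := (Finset.Ico_add_one_right_eq_Icc k m).symm
      rw [e1, e2, e3]
      exact (Finset.prod_Ico_consecutive _ (by omega) (by omega)).symm
    have hkey : hUq ^ n = ∏ j ∈ Icc k m, vq j ^ E j := by
      rw [hhUq, mul_pow, hfUn, hsplitprod, inv_pow, hAqn, mul_comm _ (∏ j ∈ Icc k m, vq j ^ E j),
        mul_assoc, mul_inv_cancel, mul_one]
    -- the right-hand side is ≡ 1 + coeff·x^k mod x^(k+1)
    have hmemIcc : Icc k m = insert k (Icc (k+1) m) := by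
      ext x; simp only [Finset.mem_Icc, Finset.mem_insert]; omega
    have hknot : k ∉ Icc (k+1) m := by simp
    have hvqk : coeff (R := ℚ) k ((vq k : ℚ⟦X⟧)) = -(c:ℚ) := by
      rw [hvqcoeff k hk1 hkm k hkm, if_neg (by omega), if_pos rfl, hc]
      split_ifs <;> norm_num
    have h1 := PcOne.unit_zpow hk0 (hPvq k k hk1 hkm le_rfl) (E k)
    have h2 : PcOne (k+1) ((∏ j ∈ Icc (k+1) m, vq j ^ E j : (ℚ⟦X⟧)ˣ) : ℚ⟦X⟧) := by
      refine PcOne.unit_prod _ _ fun j hj => ?_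
      obtain ⟨hj1, hjm⟩ := Finset.mem_Icc.mp hj
      exact (PcOne.unit_zpow (by omega) (hPvq j (k+1) (by omega) hjm (by omega)) (E j)).1
    have h2k : PcOne k ((∏ j ∈ Icc (k+1) m, vq j ^ E j : (ℚ⟦X⟧)ˣ) : ℚ⟦X⟧) :=
      h2.mono (by omega)
    have h2c : coeff (R := ℚ) k ((∏ j ∈ Icc (k+1) m, vq j ^ E j : (ℚ⟦X⟧)ˣ) : ℚ⟦X⟧) = 0 :=
      h2.2 k hk0 (by omega)
    have hR : PcOne k ((∏ j ∈ Icc k m, vq j ^ E j : (ℚ⟦X⟧)ˣ) : ℚ⟦X⟧) ∧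
        coeff (R := ℚ) k ((∏ j ∈ Icc k m, vq j ^ E j : (ℚ⟦X⟧)ˣ) : ℚ⟦X⟧) = -(c:ℚ) * E k := by
      rw [hmemIcc, Finset.prod_insert hknot, Units.val_mul]
      refine ⟨h1.1.mul h2k, ?_⟩
      rw [coeff_mul_split hk0 h1.1 h2k, h1.2, h2c, add_zero, hvqk]
      ring
    -- constant coefficient of hUq is 1
    have hP1fUq : PcOne 1 ((fUq : ℚ⟦X⟧)) :=
      ⟨by rw [hfUqval]; exact hf1, fun i hi hik => by omega⟩
    have hP1Aq : PcOne 1 ((Aq : ℚ⟦X⟧)) := by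
      rw [hAqprod]
      refine PcOne.unit_prod _ _ fun j hj => ?_
      obtain ⟨hj1, hjk⟩ := Finset.mem_Icc.mp hj
      exact (PcOne.unit_zpow one_pos (hPvq j 1 hj1 (by omega) hj1) (cW j)).1
    have hP1Aqinv : PcOne 1 ((Aq⁻¹ : (ℚ⟦X⟧)ˣ) : ℚ⟦X⟧) :=
      PcOne.inv (by rw [← Units.val_mul, mul_inv_cancel, Units.val_one]) hP1Aq
    have hconsthUq : constantCoeff (R := ℚ) ((hUq : ℚ⟦X⟧)) = 1 := by
      have := hP1fUq.mul hP1Aqinv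
      rw [← Units.val_mul, ← hhUq] at this
      exact this.1
    -- extract the coefficient identity
    have hpowP : PcOne k (((hUq : ℚ⟦X⟧)) ^ n) := by
      rw [← Units.val_pow_eq_pow_val, hkey]
      exact hR.1
    have hroot := PcOne_of_pow hk0 hn hconsthUq hpowP
    have hcoeffval : (n:ℚ) * coeff (R := ℚ) k ((hUq : ℚ⟦X⟧)) = -(c:ℚ) * E k := by
      rw [hroot.2, ← Units.val_pow_eq_pow_val, hkey, hR.2]
    have hUqint : coeff (R := ℚ) k ((hUq : ℚ⟦X⟧)) = ((coeff (R := ℤ) k ((hU : ℤ⟦X⟧)) : ℤ) : ℚ) := by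
      rw [hUqmap, Units.coe_map]
      show coeff (R := ℚ) k (ι₁ ((hU : ℤ⟦X⟧))) = _
      rw [hι₁, coeff_map]
      rfl
    rw [hUqint] at hcoeffval
    have hZ : (n:ℤ) * coeff (R := ℤ) k ((hU : ℤ⟦X⟧)) = -c * E k := by exact_mod_cast hcoeffval
    exact ⟨-(coeff (R := ℤ) k ((hU : ℤ⟦X⟧))), by linarith [hZ]⟩
  -- integral exponents strictly below N/2
  have hInt : ∀ k, 1 ≤ k → k ≤ m → 2*k ≠ N → ∃ w' : ℤ, E k = n * w' := by
    intro k
    induction k using Nat.strong_induction_on with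
    | _ k ih =>
      intro hk1 hkm hkN
      obtain ⟨w', hw'⟩ := hstep k hk1 hkm
        (fun j hj1 hjk => ih j hjk hj1 (by omega) (by omega))
      rw [if_neg hkN, one_mul] at hw'
      exact ⟨w', hw'⟩
  -- conclusion
  intro k hk
  obtain ⟨hk1, hkm⟩ := Finset.mem_Icc.mp hk
  have hn0 : (n : ℚ) ≠ 0 := Nat.cast_ne_zero.mpr hn.ne'
  constructor
  · intro hkN
    obtain ⟨w', hw'⟩ := hInt k hk1 hkm hkN
    refine ⟨w', ?_⟩
    have h1 : ((E k : ℤ) : ℚ) = (n:ℚ) * w' := by exact_mod_cast hw'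
    rw [hE k hk] at h1
    exact mul_left_cancel₀ hn0 h1
  · intro hkN
    obtain ⟨w', hw'⟩ := hstep k hk1 hkm
      (fun j hj1 hjk => hInt j hj1 (by omega) (by omega))
    rw [if_pos hkN] at hw'
    refine ⟨w', ?_⟩
    have h1 : (2:ℚ) * ((E k : ℤ) : ℚ) = (n:ℚ) * w' := by exact_mod_cast hw'
    rw [hE k hk] at h1
    have h2 : (n:ℚ) * (2 * e k) = (n:ℚ) * w' := by ring_nf; ring_nf at h1; linarith
    have h3 : 2 * e k = w' := mul_left_cancel₀ hn0 h2
    field_simp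
    linarith
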